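/- Let P and Q be positive joint distributions on 𝒳 × 𝒴, let P* be a minimizer of min{ D(P̃‖Q) : P̃ a joint distribution with P̃_X = P_X and P̃_Y = P_Y }, and define ȷ(x,y) = log(P*(x,y)/Q(x,y)). Then E(P̄‖Q) = Σ_{x,y} P̄(x,y)·ȷ(x,y) + o(‖P̄ − P‖) as P̄ → P: for every ε > 0 there exists δ > 0 such that every joint distribution P̄ on 𝒳 × 𝒴 with ‖P̄ − P‖ := Σ_{x,y} |P̄(x,y) − P(x,y)| < δ satisfies |E(P̄‖Q) − Σ_{x,y} P̄(x,y)·ȷ(x,y)| ≤ ε·‖P̄ − P‖. -/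

import Mathlib

open scoped Classical BigOperators

noncomputable section

variable {X Y : Type*} [Fintype X] [Fintype Y]

/-- `P` is a joint distribution on `X × Y`. -/
def IsDist (P : X × Y → ℝ) : Prop :=
  (∀ z, 0 ≤ P z) ∧ ∑ z : X × Y, P z = 1

/-- `P` is a positive joint distribution on `X × Y`. -/
def IsPos (P : X × Y → ℝ) : Prop :=
  (∀ z, 0 < P z) ∧ ∑ z : X × Y, P z = 1

/-- The first marginal of a joint distribution. -/
def margX (P : X × Y → ℝ) (x : X) : ℝ := ∑ y : Y, P (x, y)

/-- The second marginal of a joint distribution. -/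
def margY (P : X × Y → ℝ) (y : Y) : ℝ := ∑ x : X, P (x, y)

/-- Relative entropy `D(P‖Q)` (natural log; `Real.log 0 = 0` realizes `0·log 0 = 0`). -/
def relEnt (P Q : X × Y → ℝ) : ℝ := ∑ z : X × Y, P z * Real.log (P z / Q z)

/-- Projected relative entropy `E(P‖Q)`. -/
def projE (P Q : X × Y → ℝ) : ℝ :=
  sInf { d : ℝ | ∃ P' : X × Y → ℝ,
    IsDist P' ∧ margX P' = margX P ∧ margY P' = margY P ∧ d = relEnt P' Q }

/-- `R ∈ ℰ^{xy}(S)` : `R` has the same correlation coordinates as `S`. -/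
def SameCorr (R S : X × Y → ℝ) : Prop :=
  ∃ a1 : X → ℝ, ∃ a2 : Y → ℝ,
    ∀ x : X, ∀ y : Y, Real.log (R (x, y) / S (x, y)) = a1 x + a2 y

/-- The type (empirical distribution) of a sequence. -/
def empDist {n : ℕ} (x : Fin n → X) (a : X) : ℝ :=
  ((Finset.univ.filter fun i => x i = a).card : ℝ) / n

/-- The joint type of a pair of sequences. -/
def empJoint {n : ℕ} (x : Fin n → X) (y : Fin n → Y) (z : X × Y) : ℝ :=
  ((Finset.univ.filter fun i => x i = z.1 ∧ y i = z.2).card : ℝ) / n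

/-- Probability of a set under the `n`-fold i.i.d. product of `P`. -/
def prodProb (P : X × Y → ℝ) (n : ℕ) (A : Set ((Fin n → X) × (Fin n → Y))) : ℝ :=
  ∑ z : (Fin n → X) × (Fin n → Y),
    if z ∈ A then ∏ i : Fin n, P (z.1 i, z.2 i) else 0

/-- `P` is a joint type with denominator `n` (an element of `𝒫ₙ(𝒳 × 𝒴)`). -/
def IsTypeN (n : ℕ) (P : X × Y → ℝ) : Prop :=
  IsDist P ∧ ∀ z : X × Y, ∃ k : ℕ, P z = (k : ℝ) / n

/-- `Eₙ(P̄‖Q)` : projected relative entropy restricted to joint types. -/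
def En (n : ℕ) (Pbar Q : X × Y → ℝ) : ℝ :=
  sInf { d : ℝ | ∃ Pt : X × Y → ℝ,
    IsTypeN n Pt ∧ margX Pt = margX Pbar ∧ margY Pt = margY Pbar ∧ d = relEnt Pt Q }

/-- Standard normal cumulative distribution function `Φ`. -/
def stdNormalCDF (t : ℝ) : ℝ :=
  ∫ u in Set.Iic t, (Real.sqrt (2 * Real.pi))⁻¹ * Real.exp (-(u ^ 2) / 2)

/-- Inverse of the standard normal CDF, `Φ⁻¹`. -/
def stdNormalCDFInv (e : ℝ) : ℝ := Function.invFun stdNormalCDF e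

/- ### auxiliary lemmas -/

lemma sub_le_mul_log' {p q : ℝ} (hp : 0 ≤ p) (hq : 0 < q) :
    p - q ≤ p * Real.log (p / q) := by
  rcases eq_or_lt_of_le hp with h | h
  · simp [← h]; linarith
  · have h1 : Real.log (q / p) ≤ q / p - 1 := Real.log_le_sub_one_of_pos (by positivity)
    have h2 : Real.log (p / q) = - Real.log (q / p) := by
      rw [← Real.log_inv]; congr 1; field_simp
    have h3 := mul_le_mul_of_nonneg_left h1 h.le
    have h4 : p * (q / p - 1) = q - p := by field_simp
    rw [h4] at h3
    rw [h2, mul_neg]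
    linarith

lemma mul_log_div_eq' {x q : ℝ} (hx : 0 ≤ x) (hq : 0 < q) :
    x * Real.log (x / q) = x * Real.log x - x * Real.log q := by
  rcases eq_or_lt_of_le hx with h | h
  · simp [← h]
  · rw [Real.log_div h.ne' hq.ne']; ring

lemma mul_log_split' {p s q : ℝ} (hp : 0 ≤ p) (hs : 0 < s) (hq : 0 < q) :
    p * Real.log (p / q) = p * Real.log (p / s) + p * Real.log (s / q) := by
  rcases eq_or_lt_of_le hp with h | h
  · simp [← h]
  · rw [← mul_add, ← Real.log_mul (by positivity) (by positivity)]
    congr 2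
    field_simp

lemma conv_term' {a b q t : ℝ} (ha : 0 ≤ a) (hb : 0 ≤ b) (hq : 0 < q) (ht : 0 ≤ t) (ht1 : t ≤ 1) :
    ((1-t)*a + t*b) * Real.log (((1-t)*a + t*b)/q)
      ≤ (1-t) * (a * Real.log (a/q)) + t * (b * Real.log (b/q)) := by
  have hc : 0 ≤ (1-t)*a + t*b := by nlinarith
  have key := Real.convexOn_mul_log.2 (Set.mem_Ici.2 ha) (Set.mem_Ici.2 hb)
    (by linarith : (0:ℝ) ≤ 1 - t) ht (by ring)
  simp only [smul_eq_mul] at key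
  rw [mul_log_div_eq' hc hq, mul_log_div_eq' ha hq, mul_log_div_eq' hb hq]
  have e : ((1-t)*a + t*b) * Real.log q
      = (1-t)*(a*Real.log q) + t*(b*Real.log q) := by ring
  nlinarith [key]

/-- the defining set of `projE Pb Q` is bounded below by `0` when `Q` is positive. -/
lemma projE_set_bddBelow (Pb Q : X × Y → ℝ) (hQ : IsPos Q) :
    ∀ d ∈ { d : ℝ | ∃ P' : X × Y → ℝ,
      IsDist P' ∧ margX P' = margX Pb ∧ margY P' = margY Pb ∧ d = relEnt P' Q },
      (0:ℝ) ≤ d := by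
  rintro d ⟨P', hP', -, -, rfl⟩
  have h : ∑ z : X × Y, (P' z - Q z) ≤ ∑ z : X × Y, P' z * Real.log (P' z / Q z) :=
    Finset.sum_le_sum fun z _ => sub_le_mul_log' (hP'.1 z) (hQ.1 z)
  have h2 : ∑ z : X × Y, (P' z - Q z) = 0 := by
    rw [Finset.sum_sub_distrib, hP'.2, hQ.2]; ring
  rw [relEnt]; linarith

/-- splitting relative entropy through a positive intermediate distribution. -/
lemma relEnt_split (P' S Q : X × Y → ℝ) (hP' : ∀ z, 0 ≤ P' z) (hS : ∀ z, 0 < S z)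
    (hQ : ∀ z, 0 < Q z) :
    relEnt P' Q = (∑ z : X × Y, P' z * Real.log (P' z / S z))
      + ∑ z : X × Y, P' z * Real.log (S z / Q z) := by
  rw [relEnt, ← Finset.sum_add_distrib]
  exact Finset.sum_congr rfl fun z _ => mul_log_split' (hP' z) (hS z) (hQ z)

lemma relEnt_aux_nonneg (P' S : X × Y → ℝ) (hP' : ∀ z, 0 ≤ P' z) (hS : ∀ z, 0 < S z)
    (h1 : ∑ z : X × Y, P' z = 1) (h2 : ∑ z : X × Y, S z = 1) :
    0 ≤ ∑ z : X × Y, P' z * Real.log (P' z / S z) := by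
  have h : ∑ z : X × Y, (P' z - S z) ≤ ∑ z : X × Y, P' z * Real.log (P' z / S z) :=
    Finset.sum_le_sum fun z _ => sub_le_mul_log' (hP' z) (hS z)
  have h3 : ∑ z : X × Y, (P' z - S z) = 0 := by
    rw [Finset.sum_sub_distrib, h1, h2]; ring
  linarith

/-- A sum against an additively decomposable function only depends on the marginals. -/
lemma sum_mul_additive (R : X × Y → ℝ) (a1 : X → ℝ) (a2 : Y → ℝ) :
    ∑ z : X × Y, R z * (a1 z.1 + a2 z.2)
      = ∑ x : X, margX R x * a1 x + ∑ y : Y, margY R y * a2 y := by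
  rw [Fintype.sum_prod_type]
  simp only [mul_add, Finset.sum_add_distrib]
  congr 1
  · refine Finset.sum_congr rfl fun x _ => ?_
    rw [margX, Finset.sum_mul]
  · rw [Finset.sum_comm]
    refine Finset.sum_congr rfl fun y _ => ?_
    rw [margY, Finset.sum_mul]

/-- Step A : a minimizer of the projected relative entropy is positive. -/
lemma minimizer_pos (P Q Ps : X × Y → ℝ) (hP : IsPos P) (hQ : IsPos Q)
    (hPs : IsDist Ps) (hPsX : margX Ps = margX P) (hPsY : margY Ps = margY P)
    (hmin : relEnt Ps Q = projE P Q) : ∀ z, 0 < Ps z := by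
  by_contra hc
  push_neg at hc
  obtain ⟨z0, hz0⟩ := hc
  have hz0' : Ps z0 = 0 := le_antisymm hz0 (hPs.1 z0)
  set D0 := relEnt Ps Q with hD0
  have hc0 : 0 < P z0 := hP.1 z0
  set c := P z0 with hcdef
  set L := Real.log (P z0 / Q z0) with hL
  set A := ∑ z ∈ Finset.univ.erase z0, P z * Real.log (P z / Q z) with hA
  set t := min (1/2 : ℝ) (Real.exp (-(A + c*L - D0 + 1)/c)) with htdef
  have ht0 : 0 < t := lt_min (by norm_num) (Real.exp_pos _)
  have ht1 : t ≤ 1/2 := min_le_left _ _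
  have hlogt : c * Real.log t ≤ -(A + c*L - D0 + 1) := by
    have h1 : Real.log t ≤ -(A + c*L - D0 + 1)/c := by
      rw [Real.log_le_iff_le_exp ht0]
      exact min_le_right _ _
    calc c * Real.log t ≤ c * (-(A + c*L - D0 + 1)/c) := by
          exact mul_le_mul_of_nonneg_left h1 hc0.le
      _ = -(A + c*L - D0 + 1) := by field_simp
  set Pt : X × Y → ℝ := fun z => (1-t) * Ps z + t * P z with hPt
  have hPt_dist : IsDist Pt := by
    constructor
    · intro z
      have := hPs.1 z
      have := (hP.1 z).le
      have : (0:ℝ) ≤ 1 - t := by linarith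
      positivity
    · simp only [hPt]
      rw [Finset.sum_add_distrib, ← Finset.mul_sum, ← Finset.mul_sum, hPs.2, hP.2]
      ring
  have hPt_mX : margX Pt = margX P := by
    funext x
    have e1 := congrFun hPsX x
    simp only [margX] at e1 ⊢
    rw [Finset.sum_add_distrib, ← Finset.mul_sum, ← Finset.mul_sum, e1]
    ring
  have hPt_mY : margY Pt = margY P := by
    funext y
    have e1 := congrFun hPsY y
    simp only [margY] at e1 ⊢
    rw [Finset.sum_add_distrib, ← Finset.mul_sum, ← Finset.mul_sum, e1]
    ring
  have hle : projE P Q ≤ relEnt Pt Q := by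
    apply csInf_le ⟨0, fun d hd => projE_set_bddBelow P Q hQ d hd⟩
    exact ⟨Pt, hPt_dist, hPt_mX, hPt_mY, rfl⟩
  -- now the strict decrease
  have hsplit0 : ∑ z ∈ Finset.univ.erase z0, Ps z * Real.log (Ps z / Q z) = D0 := by
    rw [hD0, relEnt, ← Finset.sum_erase_add Finset.univ
      (fun z => Ps z * Real.log (Ps z / Q z)) (Finset.mem_univ z0)]
    simp [hz0']
  have hz0term : Pt z0 * Real.log (Pt z0 / Q z0) = t * c * (Real.log t + L) := by
    have e0 : Pt z0 = t * c := by simp [hPt, hz0']; exact Or.inl rfl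
    rw [e0]
    have e1 : t * c / Q z0 = t * (c / Q z0) := by ring
    rw [e1, Real.log_mul ht0.ne' (ne_of_gt (div_pos hc0 (hQ.1 z0)))]
  have hbound : relEnt Pt Q ≤ D0 + t * (A + c*L - D0 + c * Real.log t) := by
    have hsum := Finset.sum_erase_add Finset.univ
      (fun z => Pt z * Real.log (Pt z / Q z)) (Finset.mem_univ z0)
    have herase : ∑ z ∈ Finset.univ.erase z0, Pt z * Real.log (Pt z / Q z)
        ≤ (1-t) * (∑ z ∈ Finset.univ.erase z0, Ps z * Real.log (Ps z / Q z)) + t * A := by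
      rw [hA, Finset.mul_sum, Finset.mul_sum, ← Finset.sum_add_distrib]
      exact Finset.sum_le_sum fun z _ =>
        conv_term' (hPs.1 z) (hP.1 z).le (hQ.1 z) ht0.le (by linarith)
    have : relEnt Pt Q = (∑ z ∈ Finset.univ.erase z0, Pt z * Real.log (Pt z / Q z))
        + Pt z0 * Real.log (Pt z0 / Q z0) := by
      rw [relEnt, ← hsum]
    rw [this, hz0term, hsplit0] at *
    nlinarith [herase]
  have : relEnt Pt Q ≤ D0 - t := by nlinarith [hbound, hlogt]
  rw [hmin] at *
  linarith

/-- Step B : KKT / quadrilateral identity for the log-likelihood ratio of the minimizer. -/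
lemma j_quadrilateral [Nonempty X] [Nonempty Y]
    (P Q Ps : X × Y → ℝ) (hP : IsPos P) (hQ : IsPos Q)
    (hPs : IsDist Ps) (hpos : ∀ z, 0 < Ps z)
    (hPsX : margX Ps = margX P) (hPsY : margY Ps = margY P)
    (hmin : relEnt Ps Q = projE P Q) :
    ∀ x x' : X, ∀ y y' : Y,
      Real.log (Ps (x,y) / Q (x,y)) + Real.log (Ps (x',y') / Q (x',y'))
        = Real.log (Ps (x,y') / Q (x,y')) + Real.log (Ps (x',y) / Q (x',y)) := by
  intro x x' y y'
  obtain ⟨zm, -, hzm⟩ := Finset.exists_min_image Finset.univ Ps ⟨(x,y), Finset.mem_univ _⟩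
  set m := Ps zm with hmdef
  have hm0 : 0 < m := hpos zm
  have hmle : ∀ z, m ≤ Ps z := fun z => hzm z (Finset.mem_univ z)
  set g : X → ℝ := fun a => (if a = x then (1:ℝ) else 0) - (if a = x' then (1:ℝ) else 0)
    with hg
  set h : Y → ℝ := fun b => (if b = y then (1:ℝ) else 0) - (if b = y' then (1:ℝ) else 0)
    with hh
  set v : X × Y → ℝ := fun z => g z.1 * h z.2 with hv
  have hvabs : ∀ z, |v z| ≤ 1 := by
    intro z
    rw [hv]
    simp only
    rw [abs_mul]
    have hga : |g z.1| ≤ 1 := by simp only [hg]; split <;> split <;> norm_num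
    have hha : |h z.2| ≤ 1 := by simp only [hh]; split <;> split <;> norm_num
    exact mul_le_one₀ hga (abs_nonneg _) hha
  have hgsum : ∑ a : X, g a = 0 := by simp [hg, Finset.sum_sub_distrib]
  have hhsum : ∑ b : Y, h b = 0 := by simp [hh, Finset.sum_sub_distrib]
  have hvsumX : ∀ a : X, ∑ b : Y, v (a, b) = 0 := by
    intro a
    simp only [hv]
    rw [← Finset.mul_sum, hhsum, mul_zero]
  have hvsumY : ∀ b : Y, ∑ a : X, v (a, b) = 0 := by
    intro b
    simp only [hv]
    rw [← Finset.sum_mul, hgsum, zero_mul]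
  have hvsum : ∑ z : X × Y, v z = 0 := by
    rw [Fintype.sum_prod_type]
    exact Finset.sum_eq_zero fun a _ => hvsumX a
  set f : ℝ → ℝ := fun t => relEnt (fun z => Ps z + t * v z) Q with hf
  have hlocmin : IsLocalMin f 0 := by
    have hnhds : Set.Ioo (-m) m ∈ nhds (0:ℝ) := Ioo_mem_nhds (by linarith) hm0
    filter_upwards [hnhds] with t ht
    have habs : |t| < m := abs_lt.mpr ⟨ht.1, ht.2⟩
    have hnn : ∀ z, 0 ≤ Ps z + t * v z := by
      intro z
      have h1 : |t * v z| ≤ |t| := by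
        rw [abs_mul]
        exact mul_le_of_le_one_right (abs_nonneg t) (hvabs z)
      have h2 := (abs_le.mp h1).1
      have := hmle z
      linarith
    have hdist : IsDist (fun z => Ps z + t * v z) := by
      refine ⟨hnn, ?_⟩
      rw [Finset.sum_add_distrib, ← Finset.mul_sum, hvsum, hPs.2]
      ring
    have hmX : margX (fun z => Ps z + t * v z) = margX P := by
      funext a
      have e1 := congrFun hPsX a
      simp only [margX] at e1 ⊢
      rw [Finset.sum_add_distrib, ← Finset.mul_sum, hvsumX a, ← e1]
      ring
    have hmY : margY (fun z => Ps z + t * v z) = margY P := by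
      funext b
      have e1 := congrFun hPsY b
      simp only [margY] at e1 ⊢
      rw [Finset.sum_add_distrib, ← Finset.mul_sum, hvsumY b, ← e1]
      ring
    have hf0 : f 0 = relEnt Ps Q := by
      simp only [hf, zero_mul, add_zero]
    rw [hf0, hmin]
    exact csInf_le ⟨0, fun d hd => projE_set_bddBelow P Q hQ d hd⟩
      ⟨(fun z => Ps z + t * v z), hdist, hmX, hmY, rfl⟩
  have hderiv : HasDerivAt f (∑ z : X × Y, v z * (Real.log (Ps z / Q z) + 1)) 0 := by
    have hterm : ∀ z : X × Y, HasDerivAt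
        (fun t : ℝ => (Ps z + t * v z) * Real.log ((Ps z + t * v z) / Q z))
        (v z * (Real.log (Ps z / Q z) + 1)) 0 := by
      intro z
      have h1 : HasDerivAt (fun t : ℝ => Ps z + t * v z) (v z) 0 := by
        simpa using ((hasDerivAt_id (0:ℝ)).mul_const (v z)).const_add (Ps z)
      have h2 : HasDerivAt (fun t : ℝ => (Ps z + t * v z) / Q z) (v z / Q z) 0 :=
        h1.div_const _
      have hne : (Ps z + 0 * v z) / Q z ≠ 0 := by
        have e : Ps z + 0 * v z = Ps z := by ring
        rw [e]
        exact ne_of_gt (div_pos (hpos z) (hQ.1 z))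
      have h3 := h2.log hne
      have h4 : HasDerivAt (fun t : ℝ => (Ps z + t * v z) * Real.log ((Ps z + t * v z) / Q z))
          _ 0 := h1.fun_mul h3
      convert h4 using 1
      have hQz := (hQ.1 z).ne'
      have hPz := (hpos z).ne'
      field_simp
      simp only [mul_zero, add_zero, div_self hPz]
    exact HasDerivAt.fun_sum fun z _ => hterm z
  have hzero := hlocmin.hasDerivAt_eq_zero hderiv
  have hsplit : ∑ z : X × Y, v z * (Real.log (Ps z / Q z) + 1)
      = (∑ z : X × Y, v z * Real.log (Ps z / Q z)) + ∑ z : X × Y, v z := by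
    rw [← Finset.sum_add_distrib]
    exact Finset.sum_congr rfl fun z _ => by ring
  have hkey : ∑ z : X × Y, v z * Real.log (Ps z / Q z) = 0 := by
    rw [hsplit, hvsum] at hzero
    linarith
  set w : X × Y → ℝ := fun z => Real.log (Ps z / Q z) with hw
  have hexp : ∑ z : X × Y, v z * w z
      = w (x, y) - w (x, y') - (w (x', y) - w (x', y')) := by
    rw [Fintype.sum_prod_type]
    have inner : ∀ a : X, ∑ b : Y, v (a, b) * w (a, b)
        = g a * (w (a, y) - w (a, y')) := by
      intro a
      simp only [hv]
      have e : ∀ b : Y, g a * h b * w (a, b) = g a * (h b * w (a, b)) := fun b => by ring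
      rw [Finset.sum_congr rfl fun b _ => e b, ← Finset.mul_sum]
      congr 1
      simp [hh, sub_mul, Finset.sum_sub_distrib]
    rw [Finset.sum_congr rfl fun a _ => inner a]
    simp [hg, sub_mul, Finset.sum_sub_distrib]
  have := hkey
  rw [hexp] at this
  simp only [hw] at this
  linarith

/-- first-order Taylor approximation of the projected relative
entropy around `P` via the projected relative entropy density. -/
theorem projE_first_order_approximation
    [Nonempty X] [Nonempty Y]
    (P Q Ps : X × Y → ℝ) (hP : IsPos P) (hQ : IsPos Q)
    (hPs : IsDist Ps) (hPsX : margX Ps = margX P) (hPsY : margY Ps = margY P)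
    (hmin : relEnt Ps Q = projE P Q)
    (j : X × Y → ℝ) (hj : ∀ z : X × Y, j z = Real.log (Ps z / Q z)) :
    ∀ ε : ℝ, 0 < ε → ∃ δ : ℝ, 0 < δ ∧
      ∀ Pbar : X × Y → ℝ, IsDist Pbar →
        (∑ z : X × Y, |Pbar z - P z|) < δ →
        |projE Pbar Q - ∑ z : X × Y, Pbar z * j z|
          ≤ ε * ∑ z : X × Y, |Pbar z - P z| := by
  intro ε hε
  have hpos : ∀ z, 0 < Ps z := minimizer_pos P Q Ps hP hQ hPs hPsX hPsY hmin
  obtain ⟨x0⟩ := ‹Nonempty X›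
  obtain ⟨y0⟩ := ‹Nonempty Y›
  have hquad := j_quadrilateral P Q Ps hP hQ hPs hpos hPsX hPsY hmin
  set a1 : X → ℝ := fun x => Real.log (Ps (x, y0) / Q (x, y0)) with ha1
  set a2 : Y → ℝ := fun y =>
    Real.log (Ps (x0, y) / Q (x0, y)) - Real.log (Ps (x0, y0) / Q (x0, y0)) with ha2
  have hadd : ∀ z : X × Y, j z = a1 z.1 + a2 z.2 := by
    rintro ⟨zx, zy⟩
    have hq := hquad zx x0 zy y0
    rw [hj (zx, zy)]
    simp only [ha1, ha2]
    linarith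
  have hsum_eq : ∀ R R' : X × Y → ℝ, margX R = margX R' → margY R = margY R' →
      ∑ z : X × Y, R z * j z = ∑ z : X × Y, R' z * j z := by
    intro R R' h1 h2
    rw [Finset.sum_congr rfl fun z _ => by rw [hadd z],
        Finset.sum_congr rfl (fun z _ => by rw [hadd z] :
          ∀ z ∈ Finset.univ, R' z * j z = R' z * (a1 z.1 + a2 z.2)),
        sum_mul_additive, sum_mul_additive, h1, h2]
  obtain ⟨zm, -, hzm⟩ := Finset.exists_min_image Finset.univ Ps ⟨(x0, y0), Finset.mem_univ _⟩
  set m := Ps zm with hmdef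
  have hm0 : 0 < m := hpos zm
  have hmle : ∀ z, m ≤ Ps z := fun z => hzm z (Finset.mem_univ z)
  refine ⟨min m (ε * m), lt_min hm0 (by positivity), ?_⟩
  intro Pbar hPbar hd
  set n := ∑ z : X × Y, |Pbar z - P z| with hn
  have hn0 : 0 ≤ n := Finset.sum_nonneg fun z _ => abs_nonneg _
  have hdm : n < m := lt_of_lt_of_le hd (min_le_left _ _)
  have hdem : n < ε * m := lt_of_lt_of_le hd (min_le_right _ _)
  have habs_le : ∀ z, |Pbar z - P z| ≤ n := by
    intro z
    rw [hn]
    exact Finset.single_le_sum (f := fun z : X × Y => |Pbar z - P z|)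
      (fun z _ => abs_nonneg _) (Finset.mem_univ z)
  -- lower bound : every feasible value is at least ∑ Pbar * j
  have hlow : ∀ d ∈ { d : ℝ | ∃ P' : X × Y → ℝ,
      IsDist P' ∧ margX P' = margX Pbar ∧ margY P' = margY Pbar ∧ d = relEnt P' Q },
      (∑ z : X × Y, Pbar z * j z) ≤ d := by
    rintro d ⟨P', hP', hmx, hmy, rfl⟩
    have hsplit := relEnt_split P' Ps Q hP'.1 hpos hQ.1
    have h1 : 0 ≤ ∑ z : X × Y, P' z * Real.log (P' z / Ps z) :=
      relEnt_aux_nonneg P' Ps hP'.1 hpos hP'.2 hPs.2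
    have h2 : ∑ z : X × Y, P' z * Real.log (Ps z / Q z) = ∑ z : X × Y, P' z * j z :=
      Finset.sum_congr rfl fun z _ => by rw [hj z]
    have h3 : ∑ z : X × Y, P' z * j z = ∑ z : X × Y, Pbar z * j z :=
      hsum_eq P' Pbar hmx hmy
    rw [hsplit, h2, h3]
    linarith
  have hne : { d : ℝ | ∃ P' : X × Y → ℝ,
      IsDist P' ∧ margX P' = margX Pbar ∧ margY P' = margY Pbar ∧ d = relEnt P' Q }.Nonempty :=
    ⟨relEnt Pbar Q, Pbar, hPbar, rfl, rfl, rfl⟩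
  have hgeq : ∑ z : X × Y, Pbar z * j z ≤ projE Pbar Q := le_csInf hne hlow
  -- upper bound via the explicit competitor Ps + (Pbar - P)
  set Pt : X × Y → ℝ := fun z => Ps z + (Pbar z - P z) with hPt
  have hPtpos : ∀ z, 0 < Pt z := by
    intro z
    have h1 := (abs_le.mp (habs_le z)).1
    have := hmle z
    simp only [hPt]
    linarith
  have hPt_dist : IsDist Pt := by
    refine ⟨fun z => (hPtpos z).le, ?_⟩
    simp only [hPt]
    rw [Finset.sum_add_distrib, Finset.sum_sub_distrib, hPs.2, hPbar.2, hP.2]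
    ring
  have hPt_mX : margX Pt = margX Pbar := by
    funext a
    have e1 := congrFun hPsX a
    simp only [margX, hPt] at e1 ⊢
    rw [Finset.sum_add_distrib, Finset.sum_sub_distrib, e1]
    ring
  have hPt_mY : margY Pt = margY Pbar := by
    funext b
    have e1 := congrFun hPsY b
    simp only [margY, hPt] at e1 ⊢
    rw [Finset.sum_add_distrib, Finset.sum_sub_distrib, e1]
    ring
  have hub : relEnt Pt Q ≤ (∑ z : X × Y, Pbar z * j z) + ε * n := by
    rw [relEnt_split Pt Ps Q (fun z => (hPtpos z).le) hpos hQ.1]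
    have h2 : ∑ z : X × Y, Pt z * Real.log (Ps z / Q z) = ∑ z : X × Y, Pbar z * j z := by
      rw [Finset.sum_congr rfl (fun z _ => by rw [← hj z] :
        ∀ z ∈ Finset.univ, Pt z * Real.log (Ps z / Q z) = Pt z * j z)]
      exact hsum_eq Pt Pbar hPt_mX hPt_mY
    have h1 : ∑ z : X × Y, Pt z * Real.log (Pt z / Ps z) ≤ ε * n := by
      have hterm : ∀ z : X × Y, Pt z * Real.log (Pt z / Ps z)
          ≤ (Pbar z - P z) + (Pbar z - P z)^2 / Ps z := by
        intro z
        have hPsz := (hpos z).ne'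
        have hl : Real.log (Pt z / Ps z) ≤ Pt z / Ps z - 1 :=
          Real.log_le_sub_one_of_pos (div_pos (hPtpos z) (hpos z))
        have hml := mul_le_mul_of_nonneg_left hl (hPtpos z).le
        have e : Pt z * (Pt z / Ps z - 1) = (Pbar z - P z) + (Pbar z - P z)^2 / Ps z := by
          simp only [hPt]
          field_simp
          ring
        linarith
      have hsum := Finset.sum_le_sum fun z (_ : z ∈ Finset.univ) => hterm z
      rw [Finset.sum_add_distrib, Finset.sum_sub_distrib, hPbar.2, hP.2] at hsum
      have hq : ∑ z : X × Y, (Pbar z - P z)^2 / Ps z ≤ ε * n := by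
        have h5 : ∀ z : X × Y, (Pbar z - P z)^2 / Ps z ≤ |Pbar z - P z| * n / m := by
          intro z
          have h6 : (Pbar z - P z)^2 ≤ |Pbar z - P z| * n := by
            calc (Pbar z - P z)^2 = |Pbar z - P z| * |Pbar z - P z| := by
                  rw [sq, ← abs_mul_abs_self]
              _ ≤ |Pbar z - P z| * n := mul_le_mul_of_nonneg_left (habs_le z) (abs_nonneg _)
          exact div_le_div₀ (by positivity) h6 hm0 (hmle z)
        calc ∑ z : X × Y, (Pbar z - P z)^2 / Ps z
            ≤ ∑ z : X × Y, |Pbar z - P z| * n / m := Finset.sum_le_sum fun z _ => h5 z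
          _ = n * n / m := by rw [← Finset.sum_div, ← Finset.sum_mul, ← hn]
          _ ≤ ε * n := by
              rw [div_le_iff₀ hm0]
              nlinarith
      linarith
    linarith
  have hle : projE Pbar Q ≤ (∑ z : X × Y, Pbar z * j z) + ε * n :=
    le_trans (csInf_le ⟨_, hlow⟩ ⟨Pt, hPt_dist, hPt_mX, hPt_mY, rfl⟩) hub
  have hen : 0 ≤ ε * n := by positivity
  rw [abs_le]
  constructor <;> [linarith; linarith]
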